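/- Every connected finite simple graph whose number of edges is even and positive is strongly edge-balanced. -/

import Mathlib

open SimpleGraph

/-- The number of edges labeled `i` by the edge labeling `f`. -/
noncomputable def edgeCount {V : Type*} (G : SimpleGraph V) (f : G.edgeSet → ZMod 2) (i : ZMod 2) : ℕ :=
  Nat.card {e : G.edgeSet // f e = i}

/-- The number of edges incident to `v` that are labeled `i` (the `i`-degree of `v`). -/
noncomputable def labDeg {V : Type*} (G : SimpleGraph V) (f : G.edgeSet → ZMod 2) (i : ZMod 2) (v : V) : ℕ :=
  Nat.card {e : G.edgeSet // f e = i ∧ v ∈ (e : Sym2 V)}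

/-- The number of vertices whose induced (partial) label is `i`: those incident to strictly
more `i`-edges than `(1-i)`-edges. -/
noncomputable def vertexCount {V : Type*} (G : SimpleGraph V) (f : G.edgeSet → ZMod 2) (i : ZMod 2) : ℕ :=
  Nat.card {v : V // labDeg G f (1 - i) v < labDeg G f i v}

/-- An edge labeling (a surjective function onto `ZMod 2`) is edge-friendly if
`|e_f(0) - e_f(1)| ≤ 1`. -/
def EdgeFriendly {V : Type*} (G : SimpleGraph V) (f : G.edgeSet → ZMod 2) : Prop :=
  Function.Surjective f ∧ |(edgeCount G f 0 : ℤ) - (edgeCount G f 1 : ℤ)| ≤ 1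

/-- A graph is strongly edge-balanced if some edge-friendly labeling `f` satisfies
`v_f(0) = v_f(1)` and `e_f(0) = e_f(1)`. -/
def StronglyEdgeBalanced {V : Type*} (G : SimpleGraph V) : Prop :=
  ∃ f : G.edgeSet → ZMod 2, EdgeFriendly G f ∧
    vertexCount G f 0 = vertexCount G f 1 ∧ edgeCount G f 0 = edgeCount G f 1


namespace SEB

variable {V : Type*} [DecidableEq V]

/-- The flip relation on oriented pairs. -/
def flip2 (p q : V × V) : Prop := q = p ∨ q = p.swap

lemma flip2_refl (p : V × V) : flip2 p p := Or.inl rfl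

instance : IsTrans (V × V) (flip2 (V := V)) :=
  ⟨by rintro a b c (rfl | rfl) (rfl | rfl) <;> simp [flip2, Prod.swap_swap]⟩

lemma rel_flip2_refl (M : Multiset (V × V)) : Multiset.Rel flip2 M M :=
  (Multiset.rel_eq.mpr rfl).mono (by rintro a b _ _ rfl; exact flip2_refl a)

def pout (M : Multiset (V × V)) (v : V) : ℕ := M.countP (fun p => p.1 = v)
def pin (M : Multiset (V × V)) (v : V) : ℕ := M.countP (fun p => p.2 = v)
def pdeg (M : Multiset (V × V)) (v : V) : ℕ := M.countP (fun p => p.1 = v ∨ p.2 = v)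

lemma pdeg_eq_pout_add_pin (M : Multiset (V × V)) (h : ∀ p ∈ M, (p : V × V).1 ≠ p.2) (v : V) :
    pdeg M v = pout M v + pin M v := by
  induction M using Multiset.induction_on with
  | empty => rfl
  | cons p M ih =>
    have hp : p.1 ≠ p.2 := h p (Multiset.mem_cons_self p M)
    have ih' := ih (fun q hq => h q (Multiset.mem_cons_of_mem hq))
    simp only [pdeg, pout, pin, Multiset.countP_cons] at *
    by_cases h1 : p.1 = v <;> by_cases h2 : p.2 = v <;> simp [h1, h2] at * <;> omega

lemma rel_flip2_pdeg {M N : Multiset (V × V)} (h : Multiset.Rel flip2 M N) (v : V) :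
    pdeg M v = pdeg N v := by
  induction h with
  | zero => rfl
  | @cons a b as bs hab _ ih =>
    simp only [pdeg, Multiset.countP_cons] at *
    have : (a.1 = v ∨ a.2 = v) ↔ (b.1 = v ∨ b.2 = v) := by
      rcases hab with rfl | rfl
      · rfl
      · simp [Prod.swap, or_comm]
    rw [ih]
    by_cases hc : a.1 = v ∨ a.2 = v
    · simp [hc, this.mp hc]
    · simp [hc, this.not.mp hc]

lemma rel_flip2_nonloop {M N : Multiset (V × V)} (h : Multiset.Rel flip2 M N)
    (hM : ∀ p ∈ M, (p : V × V).1 ≠ p.2) : ∀ q ∈ N, (q : V × V).1 ≠ q.2 := by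
  induction h with
  | zero => simp
  | @cons a b as bs hab _ ih =>
    intro q hq
    rcases Multiset.mem_cons.mp hq with rfl | hq'
    · have ha := hM a (Multiset.mem_cons_self a as)
      rcases hab with rfl | rfl
      · exact ha
      · simpa [Prod.swap] using ha.symm
    · exact ih (fun p hp => hM p (Multiset.mem_cons_of_mem hp)) q hq'

/-- link for trails -/
def link : V × V → V × V → Prop := fun p q => p.2 = q.1

/-- the final vertex of a trail starting at `u` -/
def endv (T : List (V × V)) (u : V) : V := (T.getLast?).elim u Prod.snd

@[simp] lemma endv_nil (u : V) : endv ([] : List (V × V)) u = u := rfl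

lemma endv_cons (q : V × V) (T : List (V × V)) (u : V) :
    endv (q :: T) u = endv T q.2 := by
  cases T with
  | nil => rfl
  | cons r T =>
    simp only [endv, List.getLast?_cons_cons]
    cases h : (r :: T).getLast? with
    | none => simp at h
    | some x => rfl

lemma trail_count (T : List (V × V)) (u : V) (hc : T.Chain' link)
    (hh : ∀ p ∈ T.head?, (p : V × V).1 = u) (v : V) :
    (pout (↑T) v : ℤ) - pin (↑T) v
      = (if u = v then 1 else 0) - (if endv T u = v then 1 else 0) := by
  induction T generalizing u with
  | nil => rw [endv_nil]; simp [pout, pin]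
  | cons q T ih =>
    have hq : q.1 = u := hh q rfl
    have hc' := (List.isChain_cons.mp hc).2
    have hh' : ∀ p ∈ T.head?, (p : V × V).1 = q.2 := by
      intro p hp
      exact ((List.isChain_cons.mp hc).1 p hp).symm
    have ihq := ih q.2 hc' hh' 
    have hcoe : ((q :: T : List (V × V)) : Multiset (V × V)) = q ::ₘ (↑T) := rfl
    simp only [pout, pin, hcoe, Multiset.countP_cons] at *
    rw [endv_cons]
    subst hq
    by_cases h1 : q.1 = v <;> by_cases h2 : q.2 = v <;>
      simp [h1, h2] at * <;> omega



lemma exists_mem_of_pdeg_pos {M : Multiset (V × V)} {u : V} (h : pdeg M u ≠ 0) :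
    ∃ p ∈ M, (p : V × V).1 = u ∨ p.2 = u := by
  by_contra hc
  push_neg at hc
  exact h (Multiset.countP_eq_zero.mpr (by intro p hp; rw [not_or]; exact hc p hp))

lemma ext_trail : ∀ (n : ℕ) (M : Multiset (V × V)), Multiset.card M ≤ n → ∀ u : V,
    ∃ (T : List (V × V)) (M' : Multiset (V × V)),
      Multiset.Rel flip2 M ((↑T : Multiset (V × V)) + M') ∧ T.Chain' link ∧
      (∀ p ∈ T.head?, (p : V × V).1 = u) ∧ pdeg M' (endv T u) = 0 := by
  intro n
  induction n with
  | zero =>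
    intro M hM u
    have : M = 0 := Multiset.card_eq_zero.mp (Nat.le_zero.mp hM)
    subst this
    exact ⟨[], 0, by simpa using rel_flip2_refl 0, List.isChain_nil, by simp, rfl⟩
  | succ n ih =>
    intro M hM u
    by_cases h : pdeg M u = 0
    · exact ⟨[], M, by simpa using rel_flip2_refl M, List.isChain_nil, by simp, h⟩
    · obtain ⟨p, hp, hor⟩ := exists_mem_of_pdeg_pos h
      set q : V × V := if p.1 = u then p else p.swap with hqdef
      have hq1 : q.1 = u := by
        rcases hor with h1 | h2
        · simp [hqdef, h1]
        · by_cases h1 : p.1 = u <;> simp [hqdef, h1, h2]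
      have hflip : flip2 p q := by
        by_cases h1 : p.1 = u <;> simp [flip2, hqdef, h1]
      have hcard : Multiset.card (M.erase p) ≤ n := by
        have h1 := Multiset.card_erase_of_mem hp
        simp only [Nat.pred_eq_sub_one] at h1
        have hpos : 0 < Multiset.card M := Multiset.card_pos_iff_exists_mem.mpr ⟨p, hp⟩
        omega
      obtain ⟨T', M', hrel, hchain, hhead, hend⟩ := ih (M.erase p) hcard q.2
      refine ⟨q :: T', M', ?_, ?_, ?_, ?_⟩
      · have hM2 : M = p ::ₘ M.erase p := (Multiset.cons_erase hp).symm
        rw [hM2, ← Multiset.cons_coe, Multiset.cons_add]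
        exact Multiset.Rel.cons hflip hrel
      · refine List.isChain_cons.mpr ⟨?_, hchain⟩
        intro y hy
        exact (hhead y hy).symm
      · intro p' hp'
        have hq' : q = p' := by simpa using hp'
        rw [← hq', hq1]
      · rw [endv_cons]; exact hend

lemma orient : ∀ (n : ℕ) (M : Multiset (V × V)), Multiset.card M ≤ n →
    (∀ p ∈ M, (p : V × V).1 ≠ p.2) →
    ∃ N, Multiset.Rel flip2 M N ∧
      ∀ v, ((pout N v : ℤ) - pin N v ≤ 1 ∧ (pin N v : ℤ) - pout N v ≤ 1) := by
  intro n
  induction n with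
  | zero =>
    intro M hM _
    have : M = 0 := Multiset.card_eq_zero.mp (Nat.le_zero.mp hM)
    subst this
    exact ⟨0, rel_flip2_refl 0, by simp [pout, pin]⟩
  | succ n ih =>
    intro M hM hnl
    by_cases hM0 : M = 0
    · subst hM0; exact ⟨0, rel_flip2_refl 0, by simp [pout, pin]⟩
    · -- choose starting vertex u
      have hu : ∃ u, pdeg M u ≠ 0 ∧ (¬ Even (pdeg M u) ∨ ∀ v, Even (pdeg M v)) := by
        by_cases hodd : ∃ v, ¬ Even (pdeg M v)
        · obtain ⟨v, hv⟩ := hodd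
          refine ⟨v, ?_, Or.inl hv⟩
          intro h0; exact hv (h0 ▸ Even.zero)
        · push_neg at hodd
          obtain ⟨p, hp⟩ := Multiset.exists_mem_of_ne_zero hM0
          refine ⟨p.1, ?_, Or.inr hodd⟩
          have : p ∈ M.filter (fun q => q.1 = p.1 ∨ q.2 = p.1) := by
            simp [Multiset.mem_filter, hp]
          intro h0
          have := Multiset.card_pos_iff_exists_mem.mpr ⟨p, this⟩
          simp only [pdeg, Multiset.countP_eq_card_filter] at h0
          omega
      obtain ⟨u, hupos, hucase⟩ := hu
      obtain ⟨T, M', hrel, hchain, hhead, hend⟩ := ext_trail (Multiset.card M) M le_rfl u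
      have hT : T ≠ [] := by
        rintro rfl
        simp only [endv_nil] at hend
        have h1 := rel_flip2_pdeg hrel u
        simp only [Multiset.coe_nil, zero_add] at h1
        rw [h1] at hupos
        exact hupos hend
      have hcardT : 1 ≤ T.length := by
        cases T with
        | nil => exact absurd rfl hT
        | cons a l => simp
      have hcardeq : Multiset.card M = T.length + Multiset.card M' := by
        have := Multiset.card_eq_card_of_rel hrel
        simpa using this
      have hM'card : Multiset.card M' ≤ n := by omega
      have hnlTM' : ∀ p ∈ (↑T : Multiset (V × V)) + M', (p : V × V).1 ≠ p.2 :=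
        rel_flip2_nonloop hrel hnl
      have hnlM' : ∀ p ∈ M', (p : V × V).1 ≠ p.2 := by
        intro p hp; exact hnlTM' p (by simp [hp])
      have hnlT : ∀ p ∈ (↑T : Multiset (V × V)), (p : V × V).1 ≠ p.2 := by
        intro p hp; exact hnlTM' p (by simp [hp])
      obtain ⟨N', hrel', hbal⟩ := ih M' hM'card hnlM'
      refine ⟨(↑T : Multiset (V × V)) + N', ?_, ?_⟩
      · exact Multiset.Rel.trans _ hrel (Multiset.Rel.add (rel_flip2_refl _) hrel')
      · intro v
        have htc := trail_count T u hchain hhead v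
        have hpdegMv : ∀ w, pdeg M w = pdeg (↑T : Multiset (V × V)) w + pdeg M' w := fun w => by
          rw [rel_flip2_pdeg hrel w]; exact Multiset.countP_add _ _ _
        have hpdegN' : ∀ w, pdeg M' w = pdeg N' w := rel_flip2_pdeg hrel'
        have hN'sum : ∀ w, pdeg N' w = pout N' w + pin N' w :=
          pdeg_eq_pout_add_pin N' (rel_flip2_nonloop hrel' hnlM')
        have hTsum : ∀ w, pdeg (↑T : Multiset (V × V)) w = pout (↑T : Multiset (V × V)) w + pin (↑T : Multiset (V × V)) w :=
          pdeg_eq_pout_add_pin _ hnlT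
        have hpoutadd : pout ((↑T : Multiset (V × V)) + N') v = pout (↑T : Multiset (V × V)) v + pout N' v :=
          Multiset.countP_add _ _ _
        have hpinadd : pin ((↑T : Multiset (V × V)) + N') v = pin (↑T : Multiset (V × V)) v + pin N' v :=
          Multiset.countP_add _ _ _
        have hbalv := hbal v
        rw [hpoutadd, hpinadd]
        push_cast
        by_cases hvu : u = v
        · subst hvu
          by_cases hvz : endv T u = u
          · rw [if_pos rfl, if_pos hvz] at htc
            omega
          · -- v = u ≠ z
            rw [if_pos rfl, if_neg hvz] at htc
            have hTu := hTsum u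
            have hMu := hpdegMv u
            have hM'u_even : pdeg M' u % 2 = 0 := by
              rcases hucase with hodd | hall
              · have h1 : pdeg M u % 2 = 1 := Nat.not_even_iff.mp hodd
                omega
              · exfalso
                have htcz := trail_count T u hchain hhead (endv T u)
                rw [if_neg (fun h => hvz h.symm), if_pos rfl] at htcz
                have hTz := hTsum (endv T u)
                have hMz := hpdegMv (endv T u)
                have hez : pdeg M (endv T u) % 2 = 0 := Nat.even_iff.mp (hall _)
                have h0 : pdeg M' (endv T u) = 0 := hend
                omega
            have hN'u : pout N' u + pin N' u = pdeg M' u := by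
              rw [← hN'sum u, hpdegN' u]
            omega
        · by_cases hvz : endv T u = v
          · -- v = z ≠ u
            rw [if_neg hvu, if_pos hvz] at htc
            have h0 : pdeg M' v = 0 := hvz ▸ hend
            have h1 : pout N' v + pin N' v = 0 := by
              rw [← hN'sum v, ← hpdegN' v, h0]
            omega
          · rw [if_neg hvu, if_neg hvz] at htc
            omega



/-! ### Connectivity on finite edge sets -/

lemma sym2_repr (e : Sym2 V) : ∃ a b, e = s(a, b) := by
  induction e using Sym2.ind with
  | _ a b => exact ⟨a, b, rfl⟩

def reach (E : Finset (Sym2 V)) : V → V → Prop :=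
  Relation.ReflTransGen (fun a b => s(a, b) ∈ E)

lemma reach_symm {E : Finset (Sym2 V)} {u v : V} (h : reach E u v) : reach E v u :=
  by
    haveI : Std.Symm (fun a b : V => s(a, b) ∈ E) :=
      ⟨fun a b hab => by rwa [Sym2.eq_swap] at hab⟩
    exact (Relation.ReflTransGen.symmetric (r := fun a b : V => s(a, b) ∈ E)).symm _ _ h

lemma insup_def : True := trivial

def insup (E : Finset (Sym2 V)) (u : V) : Prop := ∃ e ∈ E, u ∈ e

def ConnOn (E : Finset (Sym2 V)) : Prop := ∀ u v, insup E u → insup E v → reach E u v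

lemma mem_edge_reach {E : Finset (Sym2 V)} {e : Sym2 V} (he : e ∈ E) {x y : V}
    (hx : x ∈ e) (hy : y ∈ e) : reach E x y := by
  obtain ⟨a, b, rfl⟩ := sym2_repr e
  rw [Sym2.mem_iff] at hx hy
  rcases hx with rfl | rfl <;> rcases hy with rfl | rfl
  · exact .refl
  · exact .single he
  · exact .single (by rwa [Sym2.eq_swap])
  · exact .refl

lemma reach_erase {E : Finset (Sym2 V)} {u w : V} {x y : V}
    (h : reach E x y) :
    reach (E.erase s(u, w)) x y ∨
      ((reach (E.erase s(u, w)) x u ∨ reach (E.erase s(u, w)) x w) ∧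
       (reach (E.erase s(u, w)) u y ∨ reach (E.erase s(u, w)) w y)) := by
  induction h with
  | refl => exact Or.inl .refl
  | @tail b c hxb hbc ih =>
    by_cases hbc' : s(b, c) ∈ E.erase s(u, w)
    · rcases ih with h1 | ⟨h1, h2⟩
      · exact Or.inl (h1.tail hbc')
      · refine Or.inr ⟨h1, ?_⟩
        rcases h2 with h2 | h2
        · exact Or.inl (h2.tail hbc')
        · exact Or.inr (h2.tail hbc')
    · have heq : s(b, c) = s(u, w) := by
        by_contra hne
        exact hbc' (Finset.mem_erase.mpr ⟨hne, hbc⟩)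
      have hbc2 := Sym2.eq_iff.mp heq
      rcases ih with h1 | ⟨h1, _⟩
      · rcases hbc2 with ⟨rfl, rfl⟩ | ⟨rfl, rfl⟩
        · exact Or.inr ⟨Or.inl h1, Or.inr .refl⟩
        · exact Or.inr ⟨Or.inr h1, Or.inl .refl⟩
      · rcases hbc2 with ⟨hb, rfl⟩ | ⟨hb, rfl⟩
        · exact Or.inr ⟨h1, Or.inr .refl⟩
        · exact Or.inr ⟨h1, Or.inl .refl⟩

lemma reach_to_uw {E : Finset (Sym2 V)} (hconn : ConnOn E) {u w : V} (he : s(u, w) ∈ E)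
    {x : V} (hx : insup E x) :
    reach (E.erase s(u, w)) x u ∨ reach (E.erase s(u, w)) x w := by
  have hu : insup E u := ⟨_, he, Sym2.mem_mk_left u w⟩
  rcases reach_erase (hconn x u hx hu) with h | ⟨h1, _⟩
  · exact Or.inl h
  · exact h1

noncomputable def comp (E : Finset (Sym2 V)) (r : V) : Finset (Sym2 V) :=
  @Finset.filter _ (fun f => ∃ x ∈ f, reach E r x) (Classical.decPred _) E

lemma mem_comp {E : Finset (Sym2 V)} {r : V} {f : Sym2 V} :
    f ∈ comp E r ↔ f ∈ E ∧ ∃ x ∈ f, reach E r x :=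
  @Finset.mem_filter _ _ (Classical.decPred _) _ _

lemma comp_subset (E : Finset (Sym2 V)) (r : V) : comp E r ⊆ E :=
  @Finset.filter_subset _ _ (Classical.decPred _) E

lemma edge_mem_comp {E : Finset (Sym2 V)} {r x : V} (h : s(r, x) ∈ E) :
    s(r, x) ∈ comp E r :=
  mem_comp.mpr ⟨h, r, Sym2.mem_mk_left r x, .refl⟩

lemma reach_comp {E : Finset (Sym2 V)} {r : V} : ∀ {x : V}, reach E r x → reach (comp E r) r x := by
  intro x h
  induction h with
  | refl => exact .refl
  | @tail b c hrb hbc ih =>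
    exact ih.tail (mem_comp.mpr ⟨hbc, b, Sym2.mem_mk_left b c, hrb⟩)

lemma reach_of_insup_comp {E : Finset (Sym2 V)} {r : V} {x : V}
    (hx : insup (comp E r) x) : reach E r x := by
  obtain ⟨f, hf, hxf⟩ := hx
  obtain ⟨hfE, x0, hx0, hrx0⟩ := mem_comp.mp hf
  exact hrx0.trans (mem_edge_reach hfE hx0 hxf)

lemma connOn_comp (E : Finset (Sym2 V)) (r : V) : ConnOn (comp E r) := by
  intro x y hx hy
  have hrx := reach_comp (reach_of_insup_comp hx)
  have hry := reach_comp (reach_of_insup_comp hy)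
  exact (reach_symm hrx).trans hry

lemma insup_comp_of_nonempty {E : Finset (Sym2 V)} {r : V} (h : (comp E r).Nonempty) :
    insup (comp E r) r := by
  obtain ⟨f, hf⟩ := h
  obtain ⟨hfE, x0, hx0, hrx0⟩ := mem_comp.mp hf
  rcases hrx0.cases_head with rfl | ⟨b, hb, -⟩
  · exact ⟨f, hf, hx0⟩
  · exact ⟨s(r, b), edge_mem_comp hb, Sym2.mem_mk_left r b⟩

lemma comp_cover {E : Finset (Sym2 V)} (hconn : ConnOn E) {u w : V} (he : s(u, w) ∈ E)
    {f : Sym2 V} (hf : f ∈ E.erase s(u, w)) :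
    f ∈ comp (E.erase s(u, w)) u ∨ f ∈ comp (E.erase s(u, w)) w := by
  obtain ⟨a, b, rfl⟩ := sym2_repr f
  have ha : insup E a := ⟨_, Finset.mem_of_mem_erase hf, Sym2.mem_mk_left a b⟩
  rcases reach_to_uw hconn he ha with h | h
  · exact Or.inl (mem_comp.mpr ⟨hf, a, Sym2.mem_mk_left a b, reach_symm h⟩)
  · exact Or.inr (mem_comp.mpr ⟨hf, a, Sym2.mem_mk_left a b, reach_symm h⟩)

lemma comp_disjoint {E : Finset (Sym2 V)} {u w : V}
    (hr : ¬ reach E u w) : Disjoint (comp E u) (comp E w) := by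
  rw [Finset.disjoint_left]
  intro f hfu hfw
  obtain ⟨hfE, x, hx, hux⟩ := mem_comp.mp hfu
  obtain ⟨-, y, hy, hwy⟩ := mem_comp.mp hfw
  exact hr (hux.trans ((mem_edge_reach hfE hx hy).trans (reach_symm hwy)))

lemma split {E : Finset (Sym2 V)} (hconn : ConnOn E) {u w : V} (hne : u ≠ w)
    (he : s(u, w) ∈ E) :
    ∃ A B : Finset (Sym2 V), Disjoint A B ∧ A ∪ B = E.erase s(u, w) ∧ ConnOn A ∧ ConnOn B ∧
      (A.Nonempty → insup A u) ∧ (B.Nonempty → insup B w) := by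
  by_cases hr : reach (E.erase s(u, w)) u w
  · refine ⟨E.erase s(u, w), ∅, Finset.disjoint_empty_right _, Finset.union_empty _, ?_, ?_, ?_, ?_⟩
    · intro x y hx hy
      obtain ⟨f, hf, hxf⟩ := hx
      obtain ⟨g, hg, hyg⟩ := hy
      have hxu : reach (E.erase s(u, w)) x u := by
        rcases reach_to_uw hconn he ⟨f, Finset.mem_of_mem_erase hf, hxf⟩ with h | h
        · exact h
        · exact h.trans (reach_symm hr)
      have hyu : reach (E.erase s(u, w)) y u := by
        rcases reach_to_uw hconn he ⟨g, Finset.mem_of_mem_erase hg, hyg⟩ with h | h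
        · exact h
        · exact h.trans (reach_symm hr)
      exact hxu.trans (reach_symm hyu)
    · intro x y hx _
      obtain ⟨f, hf, -⟩ := hx
      exact absurd hf (Finset.notMem_empty f)
    · intro _
      rcases hr.cases_head with heq | ⟨b, hb, -⟩
      · exact absurd heq hne
      · exact ⟨s(u, b), hb, Sym2.mem_mk_left u b⟩
    · intro h
      exact absurd h (by simp)
  · refine ⟨comp (E.erase s(u, w)) u, comp (E.erase s(u, w)) w, comp_disjoint hr, ?_,
      connOn_comp _ _, connOn_comp _ _, fun h => insup_comp_of_nonempty h,
      fun h => insup_comp_of_nonempty h⟩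
    apply Finset.Subset.antisymm
    · intro f hf
      rcases Finset.mem_union.mp hf with h | h
      · exact comp_subset _ _ h
      · exact comp_subset _ _ h
    · intro f hf
      exact Finset.mem_union.mpr (comp_cover hconn he hf)



/-! ### P3 decompositions -/

def edges3 (t : V × V × V) : Multiset (Sym2 V) := {s(t.1, t.2.1), s(t.2.1, t.2.2)}

def good3 (t : V × V × V) : Prop := t.1 ≠ t.2.1 ∧ t.2.1 ≠ t.2.2 ∧ t.1 ≠ t.2.2

def D3 (E : Finset (Sym2 V)) : Prop :=
  ∃ P : Multiset (V × V × V), (∀ t ∈ P, good3 t) ∧ P.bind edges3 = E.val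

lemma D3_empty : D3 (∅ : Finset (Sym2 V)) := ⟨0, by simp, by simp⟩

lemma val_erase_cons {E : Finset (Sym2 V)} {e : Sym2 V} (he : e ∈ E) :
    E.val = e ::ₘ (E.erase e).val := by
  rw [Finset.erase_val]
  exact (Multiset.cons_erase (Finset.mem_val.mpr he)).symm

lemma insup_exists {E : Finset (Sym2 V)} {u : V} (h : insup E u) : ∃ w, s(u, w) ∈ E := by
  obtain ⟨e, he, hu⟩ := h
  obtain ⟨a, b, rfl⟩ := sym2_repr e
  rw [Sym2.mem_iff] at hu
  rcases hu with rfl | rfl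
  · exact ⟨b, he⟩
  · exact ⟨a, by rwa [Sym2.eq_swap]⟩

lemma ne_of_mem_nonloop {E : Finset (Sym2 V)} (hnl : ∀ e ∈ E, ¬ e.IsDiag) {a b : V}
    (h : s(a, b) ∈ E) : a ≠ b := by
  intro hab
  exact hnl _ h (by rw [Sym2.mk_isDiag_iff]; exact hab)

lemma main : ∀ (n : ℕ) (E : Finset (Sym2 V)), E.card ≤ n → (∀ e ∈ E, ¬ e.IsDiag) → ConnOn E →
    (Even E.card → D3 E) ∧
    (¬ Even E.card → ∀ u, insup E u → ∃ x, s(u, x) ∈ E ∧ D3 (E.erase s(u, x))) := by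
  intro n
  induction n with
  | zero =>
    intro E hE _ _
    have hE0 : E = ∅ := Finset.card_eq_zero.mp (Nat.le_zero.mp hE)
    subst hE0
    refine ⟨fun _ => D3_empty, fun hodd => ?_⟩
    simp at hodd
  | succ n ih =>
    intro E hcard hnl hconn
    constructor
    · -- EVEN case
      intro heven
      by_cases hE0 : E = ∅
      · subst hE0; exact D3_empty
      · obtain ⟨e0, he0⟩ := Finset.nonempty_iff_ne_empty.mpr hE0
        obtain ⟨u, w, rfl⟩ := sym2_repr e0
        have hne : u ≠ w := ne_of_mem_nonloop hnl he0
        obtain ⟨A, B, hd, hAB, hcA, hcB, hiA, hiB⟩ := split hconn hne he0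
        have hsubA : A ⊆ E.erase s(u, w) := hAB ▸ Finset.subset_union_left
        have hsubB : B ⊆ E.erase s(u, w) := hAB ▸ Finset.subset_union_right
        have hABval : (E.erase s(u, w)).val = A.val + B.val := by
          rw [← hAB, ← Finset.disjUnion_eq_union A B hd]; rfl
        have hEpos : 0 < E.card := Finset.card_pos.mpr ⟨_, he0⟩
        have hcardAB : A.card + B.card + 1 = E.card := by
          rw [← Finset.card_union_of_disjoint hd, hAB, Finset.card_erase_of_mem he0]
          omega
        have hnlA : ∀ e ∈ A, ¬ e.IsDiag := fun e h => hnl e (Finset.mem_of_mem_erase (hsubA h))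
        have hnlB : ∀ e ∈ B, ¬ e.IsDiag := fun e h => hnl e (Finset.mem_of_mem_erase (hsubB h))
        have hcardA : A.card ≤ n := by omega
        have hcardB : B.card ≤ n := by omega
        have hEval : E.val = s(u, w) ::ₘ (A.val + B.val) := by
          rw [val_erase_cons he0, hABval]
        by_cases hevA : Even A.card
        · -- B odd
          have hevB : ¬ Even B.card := by
            rw [Nat.even_iff] at heven hevA ⊢
            omega
          have hBne : B.Nonempty := by
            apply Finset.card_pos.mp
            rcases Nat.eq_zero_or_pos B.card with h0 | h1
            · exact absurd (h0 ▸ Even.zero) hevB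
            · exact h1
          obtain ⟨x2, hx2, PB, hgB, hbB⟩ := (ih B hcardB hnlB hcB).2 hevB w (hiB hBne)
          obtain ⟨PA, hgA, hbA⟩ := (ih A hcardA hnlA hcA).1 hevA
          have hx2w : x2 ≠ w := (ne_of_mem_nonloop hnlB hx2).symm
          have hx2u : x2 ≠ u := by
            intro h
            apply Finset.notMem_erase s(u, w) E
            have h2 : s(w, x2) = s(u, w) := by rw [h, Sym2.eq_swap]
            exact h2 ▸ hsubB hx2
          refine ⟨(x2, w, u) ::ₘ (PB + PA), ?_, ?_⟩
          · intro t ht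
            rcases Multiset.mem_cons.mp ht with rfl | ht'
            · exact ⟨hx2w, hne.symm, hx2u⟩
            · rcases Multiset.mem_add.mp ht' with h | h
              exacts [hgB t h, hgA t h]
          · rw [Multiset.cons_bind, Multiset.add_bind, hbB, hbA, hEval,
              val_erase_cons hx2]
            show ({s(x2, w), s(w, u)} : Multiset (Sym2 V)) + _ = _
            rw [show s(x2, w) = s(w, x2) from Sym2.eq_swap,
              show s(w, u) = s(u, w) from Sym2.eq_swap]
            simp only [Multiset.insert_eq_cons, ← Multiset.singleton_add]
            abel
        · -- A odd
          have hevB : Even B.card := by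
            rw [Nat.even_iff] at heven hevA ⊢
            omega
          have hAne : A.Nonempty := by
            apply Finset.card_pos.mp
            rcases Nat.eq_zero_or_pos A.card with h0 | h1
            · exact absurd (h0 ▸ Even.zero) hevA
            · exact h1
          obtain ⟨x1, hx1, PA, hgA, hbA⟩ := (ih A hcardA hnlA hcA).2 hevA u (hiA hAne)
          obtain ⟨PB, hgB, hbB⟩ := (ih B hcardB hnlB hcB).1 hevB
          have hx1u : u ≠ x1 := ne_of_mem_nonloop hnlA hx1
          have hx1w : w ≠ x1 := by
            intro h; subst h
            exact (Finset.notMem_erase _ _) (hsubA hx1)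
          refine ⟨(w, u, x1) ::ₘ (PA + PB), ?_, ?_⟩
          · intro t ht
            rcases Multiset.mem_cons.mp ht with rfl | ht'
            · exact ⟨hne.symm, hx1u, hx1w⟩
            · rcases Multiset.mem_add.mp ht' with h | h
              exacts [hgA t h, hgB t h]
          · rw [Multiset.cons_bind, Multiset.add_bind, hbA, hbB, hEval,
              val_erase_cons hx1]
            show ({s(w, u), s(u, x1)} : Multiset (Sym2 V)) + _ = _
            rw [show s(w, u) = s(u, w) from Sym2.eq_swap]
            simp only [Multiset.insert_eq_cons, ← Multiset.singleton_add]
            abel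
    · -- ODD case
      intro hodd u hu
      obtain ⟨w, he⟩ := insup_exists hu
      have hne : u ≠ w := ne_of_mem_nonloop hnl he
      obtain ⟨A, B, hd, hAB, hcA, hcB, hiA, hiB⟩ := split hconn hne he
      have hsubA : A ⊆ E.erase s(u, w) := hAB ▸ Finset.subset_union_left
      have hsubB : B ⊆ E.erase s(u, w) := hAB ▸ Finset.subset_union_right
      have hABval : (E.erase s(u, w)).val = A.val + B.val := by
        rw [← hAB, ← Finset.disjUnion_eq_union A B hd]; rfl
      have hEpos : 0 < E.card := Finset.card_pos.mpr ⟨_, he⟩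
      have hcardAB : A.card + B.card + 1 = E.card := by
        rw [← Finset.card_union_of_disjoint hd, hAB, Finset.card_erase_of_mem he]
        omega
      have hnlA : ∀ e ∈ A, ¬ e.IsDiag := fun e h => hnl e (Finset.mem_of_mem_erase (hsubA h))
      have hnlB : ∀ e ∈ B, ¬ e.IsDiag := fun e h => hnl e (Finset.mem_of_mem_erase (hsubB h))
      have hcardA : A.card ≤ n := by omega
      have hcardB : B.card ≤ n := by omega
      have hEval : E.val = s(u, w) ::ₘ (A.val + B.val) := by
        rw [val_erase_cons he, hABval]
      by_cases hevA : Even A.card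
      · -- both even
        have hevB : Even B.card := by
          rw [Nat.even_iff] at hodd hevA ⊢
          omega
        obtain ⟨PA, hgA, hbA⟩ := (ih A hcardA hnlA hcA).1 hevA
        obtain ⟨PB, hgB, hbB⟩ := (ih B hcardB hnlB hcB).1 hevB
        refine ⟨w, he, PA + PB, ?_, ?_⟩
        · intro t ht
          rcases Multiset.mem_add.mp ht with h | h
          exacts [hgA t h, hgB t h]
        · rw [Multiset.add_bind, hbA, hbB, hABval]
      · -- both odd
        have hevB : ¬ Even B.card := by
          rw [Nat.even_iff] at hodd hevA ⊢
          omega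
        have hAne : A.Nonempty := by
          apply Finset.card_pos.mp
          rcases Nat.eq_zero_or_pos A.card with h0 | h1
          · exact absurd (h0 ▸ Even.zero) hevA
          · exact h1
        have hBne : B.Nonempty := by
          apply Finset.card_pos.mp
          rcases Nat.eq_zero_or_pos B.card with h0 | h1
          · exact absurd (h0 ▸ Even.zero) hevB
          · exact h1
        obtain ⟨x1, hx1, PA, hgA, hbA⟩ := (ih A hcardA hnlA hcA).2 hevA u (hiA hAne)
        obtain ⟨x2, hx2, PB, hgB, hbB⟩ := (ih B hcardB hnlB hcB).2 hevB w (hiB hBne)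
        have hx1u : u ≠ x1 := ne_of_mem_nonloop hnlA hx1
        have hx1w : x1 ≠ w := by
          intro h; subst h
          exact (Finset.notMem_erase _ _) (hsubA hx1)
        have hx2w : x2 ≠ w := (ne_of_mem_nonloop hnlB hx2).symm
        have hx2u : x2 ≠ u := by
          intro h
          apply Finset.notMem_erase s(u, w) E
          have h2 : s(w, x2) = s(u, w) := by rw [h, Sym2.eq_swap]
          exact h2 ▸ hsubB hx2
        refine ⟨x1, Finset.mem_of_mem_erase (hsubA hx1), (x2, w, u) ::ₘ (PA + PB), ?_, ?_⟩
        · intro t ht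
          rcases Multiset.mem_cons.mp ht with rfl | ht'
          · exact ⟨hx2w, hne.symm, hx2u⟩
          · rcases Multiset.mem_add.mp ht' with h | h
            exacts [hgA t h, hgB t h]
        · rw [Multiset.cons_bind, Multiset.add_bind, hbA, hbB]
          have hval : (E.erase s(u, x1)).val = s(u, w) ::ₘ ((A.erase s(u, x1)).val + B.val) := by
            rw [Finset.erase_val, hEval, val_erase_cons hx1,
              Multiset.cons_add,
              Multiset.erase_cons_tail _ (by
                intro hh
                exact hx1w (Sym2.congr_right.mp hh).symm),
              Multiset.erase_cons_head]
          rw [hval, val_erase_cons hx2]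
          show ({s(x2, w), s(w, u)} : Multiset (Sym2 V)) + _ = _
          rw [show s(x2, w) = s(w, x2) from Sym2.eq_swap,
            show s(w, u) = s(u, w) from Sym2.eq_swap]
          simp only [Multiset.insert_eq_cons, ← Multiset.singleton_add]
          abel


/-! ### Flipping triples -/

def ends2 (t : V × V × V) : V × V := (t.1, t.2.2)
def flip3 (t : V × V × V) : V × V × V := (t.2.2, t.2.1, t.1)

lemma ends2_flip3 (t : V × V × V) : ends2 (flip3 t) = (ends2 t).swap := rfl

lemma edges3_flip3 (t : V × V × V) : edges3 (flip3 t) = edges3 t := by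
  obtain ⟨a, b, c⟩ := t
  show ({s(c, b), s(b, a)} : Multiset (Sym2 V)) = {s(a, b), s(b, c)}
  rw [show s(c, b) = s(b, c) from Sym2.eq_swap, show s(b, a) = s(a, b) from Sym2.eq_swap]
  simp only [Multiset.insert_eq_cons]
  exact Multiset.cons_swap _ _ _

lemma good3_flip3 {t : V × V × V} (h : good3 t) : good3 (flip3 t) := by
  obtain ⟨a, b, c⟩ := t
  obtain ⟨h1, h2, h3⟩ := h
  exact ⟨h2.symm, h1.symm, h3.symm⟩

lemma transfer {P : Multiset (V × V × V)} {N : Multiset (V × V)}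
    (h : Multiset.Rel (fun t q => flip2 (ends2 t) q) P N) :
    ∃ P' : Multiset (V × V × V), P'.map ends2 = N ∧ P'.bind edges3 = P.bind edges3 ∧
      (∀ t' ∈ P', t' ∈ P ∨ ∃ t ∈ P, t' = flip3 t) := by
  induction h with
  | zero => exact ⟨0, by simp, by simp, by simp⟩
  | @cons a b as bs hab _ ih =>
    obtain ⟨P0, h1, h2, h3⟩ := ih
    rcases hab with rfl | rfl
    · refine ⟨a ::ₘ P0, ?_, ?_, ?_⟩
      · rw [Multiset.map_cons, h1]
      · rw [Multiset.cons_bind, Multiset.cons_bind, h2]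
      · intro t' ht'
        rcases Multiset.mem_cons.mp ht' with rfl | ht''
        · exact Or.inl (Multiset.mem_cons_self _ _)
        · rcases h3 t' ht'' with h | ⟨t, ht, rfl⟩
          · exact Or.inl (Multiset.mem_cons_of_mem h)
          · exact Or.inr ⟨t, Multiset.mem_cons_of_mem ht, rfl⟩
    · refine ⟨flip3 a ::ₘ P0, ?_, ?_, ?_⟩
      · rw [Multiset.map_cons, h1, ends2_flip3]
      · rw [Multiset.cons_bind, Multiset.cons_bind, h2, edges3_flip3]
      · intro t' ht'
        rcases Multiset.mem_cons.mp ht' with rfl | ht''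
        · exact Or.inr ⟨a, Multiset.mem_cons_self _ _, rfl⟩
        · rcases h3 t' ht'' with h | ⟨t, ht, rfl⟩
          · exact Or.inl (Multiset.mem_cons_of_mem h)
          · exact Or.inr ⟨t, Multiset.mem_cons_of_mem ht, rfl⟩

lemma bind_edges3_split (Q : Multiset (V × V × V)) :
    Q.bind edges3 = Q.map (fun t => s(t.1, t.2.1)) + Q.map (fun t => s(t.2.1, t.2.2)) := by
  induction Q using Multiset.induction_on with
  | empty => simp
  | cons t Q ihq =>
    rw [Multiset.cons_bind, ihq, Multiset.map_cons, Multiset.map_cons]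
    show ({s(t.1, t.2.1), s(t.2.1, t.2.2)} : Multiset (Sym2 V)) + _ = _
    simp only [Multiset.insert_eq_cons, ← Multiset.singleton_add]
    abel

lemma countP_or_split {α : Type*} (p q : α → Prop) [DecidablePred p] [DecidablePred q]
    (s : Multiset α) (h : ∀ x ∈ s, ¬ (p x ∧ q x)) :
    Multiset.countP (fun x => p x ∨ q x) s = Multiset.countP p s + Multiset.countP q s := by
  induction s using Multiset.induction_on with
  | empty => rfl
  | cons a s ihs =>
    have ha := h a (Multiset.mem_cons_self a s)
    have ihs' := ihs (fun x hx => h x (Multiset.mem_cons_of_mem hx))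
    simp only [Multiset.countP_cons, ihs']
    by_cases hp : p a <;> by_cases hq : q a <;> simp [hp, hq] at ha ⊢ <;> omega

lemma sum_pout_pin [Fintype V] (N : Multiset (V × V)) :
    ∑ v ∈ Finset.univ, ((pout N v : ℤ) - pin N v) = 0 := by
  induction N using Multiset.induction_on with
  | empty => simp [pout, pin]
  | cons p N ihs =>
    have h1 : ∀ v, ((pout (p ::ₘ N) v : ℤ) - pin (p ::ₘ N) v)
        = ((pout N v : ℤ) - pin N v)
          + ((if p.1 = v then (1 : ℤ) else 0) - (if p.2 = v then (1 : ℤ) else 0)) := by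
      intro v
      simp only [pout, pin, Multiset.countP_cons]
      by_cases h1 : p.1 = v <;> by_cases h2 : p.2 = v <;> simp [h1, h2] <;> push_cast <;> ring
    rw [Finset.sum_congr rfl (fun v _ => h1 v), Finset.sum_add_distrib, ihs,
      Finset.sum_sub_distrib]
    simp [Finset.sum_ite_eq]


lemma walk_reach {G : SimpleGraph V} [Fintype G.edgeSet] {a b : V} (w : G.Walk a b) :
    reach G.edgeFinset a b := by
  induction w with
  | nil => exact .refl
  | cons h p ih =>
    exact Relation.ReflTransGen.head
      (SimpleGraph.mem_edgeFinset.mpr ((SimpleGraph.mem_edgeSet _).mpr h)) ih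

lemma natCard_subtype (G : SimpleGraph V) (S : Multiset (Sym2 V)) (hS : S.Nodup)
    (hsub : ∀ x ∈ S, x ∈ G.edgeSet) (p : G.edgeSet → Prop)
    (hp : ∀ e, p e ↔ (↑e : Sym2 V) ∈ S) :
    Nat.card {e : G.edgeSet // p e} = Multiset.card S := by
  have equiv : {e : G.edgeSet // p e} ≃ {x : Sym2 V // x ∈ S.toFinset} :=
    { toFun := fun e => ⟨↑e.1, Multiset.mem_toFinset.mpr ((hp e.1).mp e.2)⟩
      invFun := fun x => ⟨⟨x.1, hsub x.1 (Multiset.mem_toFinset.mp x.2)⟩,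
        (hp _).mpr (Multiset.mem_toFinset.mp x.2)⟩
      left_inv := fun e => Subtype.ext (Subtype.ext rfl)
      right_inv := fun x => Subtype.ext rfl }
  rw [Nat.card_congr equiv, Nat.card_eq_fintype_card, Fintype.card_coe,
    Multiset.toFinset_card_of_nodup hS]

end SEB

theorem connected_even_size_stronglyEdgeBalanced {V : Type*} [Fintype V]
    (G : SimpleGraph V) (hconn : G.Connected)
    (heven : Even (Nat.card G.edgeSet)) (hpos : 0 < Nat.card G.edgeSet) :
    StronglyEdgeBalanced G := by
  classical
  haveI : Fintype G.edgeSet := Fintype.ofFinite _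
  have hcardE : G.edgeFinset.card = Nat.card G.edgeSet := by
    rw [Nat.card_eq_fintype_card, SimpleGraph.edgeFinset_card]
  have hnl : ∀ e ∈ G.edgeFinset, ¬ e.IsDiag :=
    fun e he => G.not_isDiag_of_mem_edgeSet (SimpleGraph.mem_edgeFinset.mp he)
  have hconnE : SEB.ConnOn G.edgeFinset := by
    intro a b _ _
    obtain ⟨w⟩ := hconn.preconnected a b
    exact SEB.walk_reach w
  obtain ⟨P, hgood, hbind⟩ :=
    (SEB.main G.edgeFinset.card G.edgeFinset le_rfl hnl hconnE).1 (by rw [hcardE]; exact heven)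
  obtain ⟨N, hrelN, hbal⟩ := SEB.orient (Multiset.card (P.map SEB.ends2)) (P.map SEB.ends2) le_rfl
    (by
      intro q hq
      obtain ⟨t, ht, rfl⟩ := Multiset.mem_map.mp hq
      exact (hgood t ht).2.2)
  obtain ⟨P', hmap, hbind', horig⟩ := SEB.transfer (Multiset.rel_map_left.mp hrelN)
  have hgood' : ∀ t ∈ P', SEB.good3 t := by
    intro t ht
    rcases horig t ht with h | ⟨t0, ht0, rfl⟩
    · exact hgood t h
    · exact SEB.good3_flip3 (hgood t0 ht0)
  have hbindP' : P'.bind SEB.edges3 = G.edgeFinset.val := by rw [hbind', hbind]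
  set Z := P'.map (fun t => s(t.1, t.2.1)) with hZdef
  set W := P'.map (fun t => s(t.2.1, t.2.2)) with hWdef
  have hZW : Z + W = G.edgeFinset.val := by
    rw [hZdef, hWdef, ← SEB.bind_edges3_split, hbindP']
  have hndE : (G.edgeFinset.val).Nodup := G.edgeFinset.nodup
  have hndZ : Z.Nodup := Multiset.nodup_of_le (hZW ▸ Multiset.le_add_right Z W) hndE
  have hndW : W.Nodup := Multiset.nodup_of_le (hZW ▸ Multiset.le_add_left W Z) hndE
  have hsubZ : ∀ x ∈ Z, x ∈ G.edgeSet := by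
    intro x hx
    rw [← SimpleGraph.mem_edgeFinset, ← Finset.mem_val, ← hZW]
    exact Multiset.mem_add.mpr (Or.inl hx)
  have hsubW : ∀ x ∈ W, x ∈ G.edgeSet := by
    intro x hx
    rw [← SimpleGraph.mem_edgeFinset, ← Finset.mem_val, ← hZW]
    exact Multiset.mem_add.mpr (Or.inr hx)
  have hcount : ∀ x : Sym2 V, x ∈ G.edgeFinset.val →
      Multiset.count x Z + Multiset.count x W = 1 := by
    intro x hx
    rw [← Multiset.count_add, hZW]
    exact Multiset.count_eq_one_of_mem hndE hx
  have hZnotW : ∀ x ∈ Z, x ∉ W := by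
    intro x hx hxW
    have h1 := hcount x (by rw [← hZW]; exact Multiset.mem_add.mpr (Or.inl hx))
    have h2 : 1 ≤ Multiset.count x Z := Multiset.one_le_count_iff_mem.mpr hx
    have h3 : 1 ≤ Multiset.count x W := Multiset.one_le_count_iff_mem.mpr hxW
    omega
  have hmemZW : ∀ x ∈ G.edgeFinset.val, x ∈ Z ∨ x ∈ W := by
    intro x hx
    rw [← hZW] at hx
    exact Multiset.mem_add.mp hx
  have hememval : ∀ e : G.edgeSet, (↑e : Sym2 V) ∈ G.edgeFinset.val := by
    intro e
    rw [Finset.mem_val, SimpleGraph.mem_edgeFinset]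
    exact e.2
  set f : G.edgeSet → ZMod 2 := fun e => if (↑e : Sym2 V) ∈ Z then 0 else 1 with hfdef
  have hf0 : ∀ e : G.edgeSet, f e = 0 ↔ (↑e : Sym2 V) ∈ Z := by
    intro e
    simp only [hfdef]
    split_ifs with h
    · simp [h]
    · simp [h]
  have hf1 : ∀ e : G.edgeSet, f e = 1 ↔ (↑e : Sym2 V) ∈ W := by
    intro e
    simp only [hfdef]
    split_ifs with h
    · constructor
      · intro h0; exact absurd h0 (by decide)
      · intro hW; exact absurd hW (hZnotW _ h)
    · constructor
      · intro _
        rcases hmemZW _ (hememval e) with hz | hw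
        · exact absurd hz h
        · exact hw
      · intro _; rfl
  have hec0 : edgeCount G f 0 = Multiset.card Z :=
    SEB.natCard_subtype G Z hndZ hsubZ _ hf0
  have hec1 : edgeCount G f 1 = Multiset.card W :=
    SEB.natCard_subtype G W hndW hsubW _ hf1
  have heceq : edgeCount G f 0 = edgeCount G f 1 := by
    rw [hec0, hec1, hZdef, hWdef, Multiset.card_map, Multiset.card_map]
  have hld0 : ∀ v, labDeg G f 0 v = Multiset.countP (fun x => v ∈ x) Z := by
    intro v
    rw [Multiset.countP_eq_card_filter]
    refine SEB.natCard_subtype G _ (Multiset.Nodup.filter _ hndZ)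
      (fun x hx => hsubZ x (Multiset.mem_of_mem_filter hx)) _ ?_
    intro e
    rw [Multiset.mem_filter]
    constructor
    · rintro ⟨h1, h2⟩; exact ⟨(hf0 e).mp h1, h2⟩
    · rintro ⟨h1, h2⟩; exact ⟨(hf0 e).mpr h1, h2⟩
  have hld1 : ∀ v, labDeg G f 1 v = Multiset.countP (fun x => v ∈ x) W := by
    intro v
    rw [Multiset.countP_eq_card_filter]
    refine SEB.natCard_subtype G _ (Multiset.Nodup.filter _ hndW)
      (fun x hx => hsubW x (Multiset.mem_of_mem_filter hx)) _ ?_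
    intro e
    rw [Multiset.mem_filter]
    constructor
    · rintro ⟨h1, h2⟩; exact ⟨(hf1 e).mp h1, h2⟩
    · rintro ⟨h1, h2⟩; exact ⟨(hf1 e).mpr h1, h2⟩
  have hZcount : ∀ v, Multiset.countP (fun x => v ∈ x) Z
      = Multiset.countP (fun t : V × V × V => v = t.1) P'
        + Multiset.countP (fun t : V × V × V => v = t.2.1) P' := by
    intro v
    rw [hZdef, Multiset.countP_map, ← Multiset.countP_eq_card_filter]
    rw [Multiset.countP_congr rfl (fun t ht => by
      simp only [Sym2.mem_iff]
      rfl)]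
    exact SEB.countP_or_split _ _ _ (fun t ht => by
      rintro ⟨rfl, h2⟩
      exact (hgood' t ht).1 h2)
  have hWcount : ∀ v, Multiset.countP (fun x => v ∈ x) W
      = Multiset.countP (fun t : V × V × V => v = t.2.1) P'
        + Multiset.countP (fun t : V × V × V => v = t.2.2) P' := by
    intro v
    rw [hWdef, Multiset.countP_map, ← Multiset.countP_eq_card_filter]
    rw [Multiset.countP_congr rfl (fun t ht => by
      simp only [Sym2.mem_iff]
      rfl)]
    exact SEB.countP_or_split _ _ _ (fun t ht => by
      rintro ⟨rfl, h2⟩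
      exact (hgood' t ht).2.1 h2)
  have hpoutN : ∀ v, SEB.pout N v = Multiset.countP (fun t : V × V × V => v = t.1) P' := by
    intro v
    show Multiset.countP _ N = _
    rw [← hmap, Multiset.countP_map, ← Multiset.countP_eq_card_filter]
    exact Multiset.countP_congr rfl (fun t ht => by
      show ((SEB.ends2 t).1 = v) = (v = t.1)
      show (t.1 = v) = (v = t.1)
      simp [eq_comm])
  have hpinN : ∀ v, SEB.pin N v = Multiset.countP (fun t : V × V × V => v = t.2.2) P' := by
    intro v
    show Multiset.countP _ N = _
    rw [← hmap, Multiset.countP_map, ← Multiset.countP_eq_card_filter]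
    exact Multiset.countP_congr rfl (fun t ht => by
      show ((SEB.ends2 t).2 = v) = (v = t.2.2)
      show (t.2.2 = v) = (v = t.2.2)
      simp [eq_comm])
  have hDeq : ∀ v, (labDeg G f 0 v : ℤ) - labDeg G f 1 v
      = (SEB.pout N v : ℤ) - SEB.pin N v := by
    intro v
    rw [hld0 v, hld1 v, hZcount v, hWcount v, hpoutN v, hpinN v]
    push_cast
    ring
  have hcards : (Finset.univ.filter (fun v => (SEB.pout N v : ℤ) - SEB.pin N v = 1)).card
      = (Finset.univ.filter (fun v => (SEB.pout N v : ℤ) - SEB.pin N v = -1)).card := by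
    have h1 : ∑ v ∈ Finset.univ, ((SEB.pout N v : ℤ) - SEB.pin N v)
        = ∑ v ∈ Finset.univ,
            ((if (SEB.pout N v : ℤ) - SEB.pin N v = 1 then (1 : ℤ) else 0)
              - (if (SEB.pout N v : ℤ) - SEB.pin N v = -1 then (1 : ℤ) else 0)) :=
      Finset.sum_congr rfl (fun v _ => by
        have hb := hbal v
        split_ifs <;> omega)
    rw [SEB.sum_pout_pin N, Finset.sum_sub_distrib, Finset.sum_boole, Finset.sum_boole] at h1
    omega
  have hvc0 : vertexCount G f 0
      = (Finset.univ.filter (fun v => (SEB.pout N v : ℤ) - SEB.pin N v = 1)).card := by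
    show Nat.card {v : V // labDeg G f (1 - 0) v < labDeg G f 0 v} = _
    simp only [show (1 - 0 : ZMod 2) = 1 by decide]
    rw [Nat.card_eq_fintype_card, Fintype.card_subtype]
    apply Finset.card_bij (fun v _ => v)
    · intro v hv
      rw [Finset.mem_filter] at hv ⊢
      refine ⟨Finset.mem_univ v, ?_⟩
      have hD := hDeq v
      have hb := hbal v
      have := hv.2
      omega
    · intro a _ b _ h; exact h
    · intro v hv
      rw [Finset.mem_filter] at hv
      refine ⟨v, Finset.mem_filter.mpr ⟨Finset.mem_univ v, ?_⟩, rfl⟩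
      have hD := hDeq v
      have := hv.2
      omega
  have hvc1 : vertexCount G f 1
      = (Finset.univ.filter (fun v => (SEB.pout N v : ℤ) - SEB.pin N v = -1)).card := by
    show Nat.card {v : V // labDeg G f (1 - 1) v < labDeg G f 1 v} = _
    simp only [show (1 - 1 : ZMod 2) = 0 by decide]
    rw [Nat.card_eq_fintype_card, Fintype.card_subtype]
    apply Finset.card_bij (fun v _ => v)
    · intro v hv
      rw [Finset.mem_filter] at hv ⊢
      refine ⟨Finset.mem_univ v, ?_⟩
      have hD := hDeq v
      have hb := hbal v
      have := hv.2
      omega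
    · intro a _ b _ h; exact h
    · intro v hv
      rw [Finset.mem_filter] at hv
      refine ⟨v, Finset.mem_filter.mpr ⟨Finset.mem_univ v, ?_⟩, rfl⟩
      have hD := hDeq v
      have := hv.2
      omega
  have hP'pos : 0 < Multiset.card P' := by
    have h1 : Multiset.card (G.edgeFinset.val) = Multiset.card Z + Multiset.card W := by
      rw [← hZW, Multiset.card_add]
    have h2 : Multiset.card Z = Multiset.card P' := by rw [hZdef, Multiset.card_map]
    have h3 : G.edgeFinset.card = Multiset.card (G.edgeFinset.val) := rfl
    have h4 : 0 < G.edgeFinset.card := by rw [hcardE]; exact hpos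
    omega
  obtain ⟨t0, ht0⟩ := Multiset.card_pos_iff_exists_mem.mp hP'pos
  have hzmem : s(t0.1, t0.2.1) ∈ Z := by rw [hZdef]; exact Multiset.mem_map_of_mem _ ht0
  have hwmem : s(t0.2.1, t0.2.2) ∈ W := by rw [hWdef]; exact Multiset.mem_map_of_mem _ ht0
  have hsurj : Function.Surjective f := by
    intro i
    rcases (by decide : ∀ j : ZMod 2, j = 0 ∨ j = 1) i with rfl | rfl
    · exact ⟨⟨_, hsubZ _ hzmem⟩, (hf0 _).mpr hzmem⟩
    · exact ⟨⟨_, hsubW _ hwmem⟩, (hf1 _).mpr hwmem⟩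
  refine ⟨f, ⟨hsurj, ?_⟩, ?_, heceq⟩
  · rw [heceq]
    simp
  · rw [hvc0, hvc1, hcards]
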